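/- For every n ≥ 2, the language L = bbb(a^(n−1))^+ ∪ bb(a + a² + ⋯ + a^(n−1))(a^n)* ∪ b(a^(n+1))^+ over {a, b} is not suffix-convex, and every witness (u, v, w) to its non-suffix-convexity has |w| ≥ lcm(n−1, n, n+1) + 3 ≥ (n−1)n(n+1)/2 + 3; moreover (b a^i, bb a^i, bbb a^i) with i = lcm(n−1, n, n+1) is a witness. -/

import Mathlib

/-- The language `bbb(a^(n-1))^+ ∪ bb(a + ⋯ + a^(n-1))(a^n)* ∪ b(a^(n+1))^+`
over the alphabet `{a, b}`, with `a := false` and `b := true`. -/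
def suffixConvexL (n : ℕ) : Set (List Bool) :=
  {w | ∃ j : ℕ, 0 < j ∧ (n - 1) ∣ j ∧ w = [true, true, true] ++ List.replicate j false} ∪
  {w | ∃ j : ℕ, 0 < j ∧ ¬ n ∣ j ∧ w = [true, true] ++ List.replicate j false} ∪
  {w | ∃ j : ℕ, 0 < j ∧ (n + 1) ∣ j ∧ w = [true] ++ List.replicate j false}

def SuffixConvex {α : Type*} (L : Set (List α)) : Prop :=
  ∀ u v w : List α, u ∈ L → w ∈ L → u <:+ w → u <:+ v → v <:+ w → v ∈ L

/-- Suffixes of `true^k false^j` are either `true^m false^j` (m ≤ k) or `false^m` (m ≤ j). -/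
lemma suffix_rep_rep (s : List Bool) (k j : ℕ)
    (h : s <:+ List.replicate k true ++ List.replicate j false) :
    (∃ m ≤ k, s = List.replicate m true ++ List.replicate j false) ∨
    (∃ m ≤ j, s = List.replicate m false) := by
  obtain ⟨t, ht⟩ := h
  rw [List.append_eq_append_iff] at ht
  rcases ht with ⟨a', h1, h2⟩ | ⟨c', h1, h2⟩
  · left
    have ha : a' = List.replicate a'.length true := by
      apply List.eq_replicate_length.2
      intro b hb
      have : b ∈ List.replicate k true := h1 ▸ List.mem_append_right _ hb
      exact List.eq_of_mem_replicate this
    refine ⟨a'.length, ?_, by rw [h2]; exact congrArg (· ++ List.replicate j false) ha⟩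
    have := congrArg List.length h1
    simp at this; omega
  · right
    have hs : s = List.replicate s.length false := by
      apply List.eq_replicate_length.2
      intro b hb
      have : b ∈ List.replicate j false := h2 ▸ List.mem_append_right _ hb
      exact List.eq_of_mem_replicate this
    refine ⟨s.length, ?_, hs⟩
    have := congrArg List.length h2
    simp at this; omega

/-- Injectivity of the canonical form. -/
lemma rep_rep_inj {k j k' j' : ℕ}
    (h : List.replicate k (true : Bool) ++ List.replicate j false
       = List.replicate k' true ++ List.replicate j' false) : k = k' ∧ j = j' := by
  have hc := congrArg (fun l => List.count true l) h
  have hl := congrArg List.length h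
  simp [List.count_append, List.count_replicate] at hc hl
  omega

lemma mem_L_iff (n : ℕ) (x : List Bool) :
    x ∈ suffixConvexL n ↔ ∃ k j, x = List.replicate k true ++ List.replicate j false ∧ 0 < j ∧
      ((k = 3 ∧ (n - 1) ∣ j) ∨ (k = 2 ∧ ¬ n ∣ j) ∨ (k = 1 ∧ (n + 1) ∣ j)) := by
  constructor
  · rintro ((⟨j, hj, hd, rfl⟩ | ⟨j, hj, hd, rfl⟩) | ⟨j, hj, hd, rfl⟩)
    · exact ⟨3, j, by simp [List.replicate], hj, Or.inl ⟨rfl, hd⟩⟩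
    · exact ⟨2, j, by simp [List.replicate], hj, Or.inr (Or.inl ⟨rfl, hd⟩)⟩
    · exact ⟨1, j, by simp [List.replicate], hj, Or.inr (Or.inr ⟨rfl, hd⟩)⟩
  · rintro ⟨k, j, rfl, hj, (⟨rfl, hd⟩ | ⟨rfl, hd⟩ | ⟨rfl, hd⟩)⟩
    · exact Or.inl (Or.inl ⟨j, hj, hd, by simp [List.replicate]⟩)
    · exact Or.inl (Or.inr ⟨j, hj, hd, by simp [List.replicate]⟩)
    · exact Or.inr ⟨j, hj, hd, by simp [List.replicate]⟩

theorem suffixConvex_cubic_witness (n : ℕ) (hn : 2 ≤ n) :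
    ¬ SuffixConvex (suffixConvexL n) ∧
    (∀ u v w : List Bool, u <:+ v → v <:+ w → u ∈ suffixConvexL n →
      w ∈ suffixConvexL n → v ∉ suffixConvexL n →
        Nat.lcm (Nat.lcm (n - 1) n) (n + 1) + 3 ≤ w.length) ∧
    (n - 1) * n * (n + 1) / 2 + 3 ≤ Nat.lcm (Nat.lcm (n - 1) n) (n + 1) + 3 ∧
    (([true] ++ List.replicate (Nat.lcm (Nat.lcm (n - 1) n) (n + 1)) false)
        <:+ ([true, true] ++ List.replicate (Nat.lcm (Nat.lcm (n - 1) n) (n + 1)) false) ∧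
     ([true, true] ++ List.replicate (Nat.lcm (Nat.lcm (n - 1) n) (n + 1)) false)
        <:+ ([true, true, true] ++ List.replicate (Nat.lcm (Nat.lcm (n - 1) n) (n + 1)) false) ∧
     ([true] ++ List.replicate (Nat.lcm (Nat.lcm (n - 1) n) (n + 1)) false) ∈ suffixConvexL n ∧
     ([true, true, true] ++ List.replicate (Nat.lcm (Nat.lcm (n - 1) n) (n + 1)) false)
        ∈ suffixConvexL n ∧
     ([true, true] ++ List.replicate (Nat.lcm (Nat.lcm (n - 1) n) (n + 1)) false)
        ∉ suffixConvexL n) := by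
  set N := Nat.lcm (Nat.lcm (n - 1) n) (n + 1) with hN
  have h1 : (n - 1) ∣ N := dvd_trans (Nat.dvd_lcm_left _ _) (Nat.dvd_lcm_left _ _)
  have h2 : n ∣ N := dvd_trans (Nat.dvd_lcm_right _ _) (Nat.dvd_lcm_left _ _)
  have h3 : (n + 1) ∣ N := Nat.dvd_lcm_right _ _
  have hNpos : 0 < N :=
    Nat.pos_of_ne_zero (Nat.lcm_ne_zero (Nat.lcm_ne_zero (by omega) (by omega)) (by omega))
  -- the middle claim
  have middle : ∀ u v w : List Bool, u <:+ v → v <:+ w → u ∈ suffixConvexL n →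
      w ∈ suffixConvexL n → v ∉ suffixConvexL n → N + 3 ≤ w.length := by
    intro u v w huv hvw hu hw hv
    rw [mem_L_iff] at hu hw
    obtain ⟨k, j, rfl, hj, hwk⟩ := hw
    obtain ⟨m, j', huform, hj', humem⟩ := hu
    have huw : u <:+ List.replicate k true ++ List.replicate j false := huv.trans hvw
    have hutrue : true ∈ u := by
      rw [huform]
      have hm : m = 3 ∨ m = 2 ∨ m = 1 := by omega
      exact List.mem_append_left _ (List.mem_replicate.2 ⟨by omega, rfl⟩)
    rcases suffix_rep_rep u k j huw with ⟨m', hm'k, hu'⟩ | ⟨m', _, hu'⟩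
    swap
    · exfalso
      rw [hu'] at hutrue
      exact absurd (List.eq_of_mem_replicate hutrue) (by simp)
    obtain ⟨hmm, hjj⟩ := rep_rep_inj (hu'.symm.trans huform)
    subst hjj
    rcases suffix_rep_rep v k j hvw with ⟨p, hpk, hv'⟩ | ⟨q, _, hv'⟩
    swap
    · exfalso
      have : true ∈ v := huv.subset hutrue
      rw [hv'] at this
      exact absurd (List.eq_of_mem_replicate this) (by simp)
    subst hv'
    rw [hu'] at huv
    have hmp : m' ≤ p := by
      have := List.IsSuffix.length_le huv
      simp at this; omega
    have hvnot := fun h => hv ((mem_L_iff n _).2 h)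
    rcases hwk with ⟨rfl, hd⟩ | ⟨rfl, hd⟩ | ⟨rfl, hd⟩
    · -- w = bbb a^j
      rcases humem with ⟨rfl, hd'⟩ | ⟨rfl, hd'⟩ | ⟨rfl, hd'⟩
      · have : m' = 3 := by omega
        subst this
        interval_cases p
        exact absurd ⟨3, j, rfl, hj, Or.inl ⟨rfl, hd⟩⟩ hvnot
      · have : m' = 2 := by omega
        subst this
        interval_cases p
        · exact absurd ⟨2, j, rfl, hj, Or.inr (Or.inl ⟨rfl, hd'⟩)⟩ hvnot
        · exact absurd ⟨3, j, rfl, hj, Or.inl ⟨rfl, hd⟩⟩ hvnot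
      · have : m' = 1 := by omega
        subst this
        interval_cases p
        · exact absurd ⟨1, j, rfl, hj, Or.inr (Or.inr ⟨rfl, hd'⟩)⟩ hvnot
        · -- the key case: v = bb a^j ∉ L forces n ∣ j
          have hnj : n ∣ j := by
            by_contra hnj
            exact hvnot ⟨2, j, rfl, hj, Or.inr (Or.inl ⟨rfl, hnj⟩)⟩
          have hNj : N ∣ j := Nat.lcm_dvd (Nat.lcm_dvd hd hnj) hd'
          have : N ≤ j := Nat.le_of_dvd hj hNj
          simp [List.length_append]
          omega
        · exact absurd ⟨3, j, rfl, hj, Or.inl ⟨rfl, hd⟩⟩ hvnot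
    · -- w = bb a^j
      rcases humem with ⟨rfl, hd'⟩ | ⟨rfl, hd'⟩ | ⟨rfl, hd'⟩
      · omega
      · have : m' = 2 := by omega
        subst this
        interval_cases p
        exact absurd ⟨2, j, rfl, hj, Or.inr (Or.inl ⟨rfl, hd⟩)⟩ hvnot
      · have : m' = 1 := by omega
        subst this
        interval_cases p
        · exact absurd ⟨1, j, rfl, hj, Or.inr (Or.inr ⟨rfl, hd'⟩)⟩ hvnot
        · exact absurd ⟨2, j, rfl, hj, Or.inr (Or.inl ⟨rfl, hd⟩)⟩ hvnot
    · -- w = b a^j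
      rcases humem with ⟨rfl, hd'⟩ | ⟨rfl, hd'⟩ | ⟨rfl, hd'⟩
      · omega
      · omega
      · have : m' = 1 := by omega
        subst this
        interval_cases p
        exact absurd ⟨1, j, rfl, hj, Or.inr (Or.inr ⟨rfl, hd⟩)⟩ hvnot
  -- witness parts
  have wit1 : ([true] ++ List.replicate N false)
      <:+ ([true, true] ++ List.replicate N false) := ⟨[true], rfl⟩
  have wit2 : ([true, true] ++ List.replicate N false)
      <:+ ([true, true, true] ++ List.replicate N false) := ⟨[true], rfl⟩
  have witu : ([true] ++ List.replicate N false) ∈ suffixConvexL n :=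
    Or.inr ⟨N, hNpos, h3, rfl⟩
  have witw : ([true, true, true] ++ List.replicate N false) ∈ suffixConvexL n :=
    Or.inl (Or.inl ⟨N, hNpos, h1, rfl⟩)
  have witv : ([true, true] ++ List.replicate N false) ∉ suffixConvexL n := by
    rw [mem_L_iff]
    rintro ⟨k, j, heq, hj, hcond⟩
    have h22 : ([true, true] : List Bool) ++ List.replicate N false
        = List.replicate 2 true ++ List.replicate N false := by simp [List.replicate]
    rw [h22] at heq
    obtain ⟨hk, hNj⟩ := rep_rep_inj heq
    subst hNj
    rcases hcond with ⟨h, _⟩ | ⟨h, hd⟩ | ⟨h, _⟩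
    · omega
    · exact hd h2
    · omega
  refine ⟨?_, middle, ?_, wit1, wit2, witu, witw, witv⟩
  · intro hsc
    exact witv (hsc _ _ _ witu witw (wit1.trans wit2) wit1 wit2)
  · -- arithmetic inequality
    have hc1 : Nat.Coprime (n - 1) n := by
      have hne : n - 1 + 1 = n := by omega
      rw [← hne]
      exact Nat.coprime_self_add_right.2 (Nat.coprime_one_right _)
    have hA : Nat.lcm (n - 1) n = (n - 1) * n := Nat.Coprime.lcm_eq_mul hc1
    have hcop : Nat.Coprime n (n + 1) := Nat.coprime_self_add_right.2 (Nat.coprime_one_right _)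
    have hg : Nat.gcd ((n - 1) * n) (n + 1) ∣ 2 := by
      have hgeq : Nat.gcd ((n - 1) * n) (n + 1) = Nat.gcd (n - 1) (n + 1) :=
        Nat.Coprime.gcd_mul_right_cancel (n - 1) hcop
      rw [hgeq]
      have d1 : Nat.gcd (n - 1) (n + 1) ∣ (n + 1) := Nat.gcd_dvd_right _ _
      have d2 : Nat.gcd (n - 1) (n + 1) ∣ (n - 1) := Nat.gcd_dvd_left _ _
      have := Nat.dvd_sub d1 d2
      have h2eq : n + 1 - (n - 1) = 2 := by omega
      rwa [h2eq] at this
    have hprod : Nat.gcd ((n - 1) * n) (n + 1) * N = (n - 1) * n * (n + 1) := by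
      rw [hN, hA]
      exact Nat.gcd_mul_lcm _ _
    have hgle : Nat.gcd ((n - 1) * n) (n + 1) ≤ 2 := Nat.le_of_dvd (by omega) hg
    have hle : (n - 1) * n * (n + 1) ≤ 2 * N := by
      calc (n - 1) * n * (n + 1) = Nat.gcd ((n - 1) * n) (n + 1) * N := hprod.symm
        _ ≤ 2 * N := Nat.mul_le_mul_right _ hgle
    have := Nat.div_le_div_right (c := 2) hle
    rw [Nat.mul_div_cancel_left _ (by norm_num)] at this
    omega
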